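/- Let (a_n) be a sequence in a commutative ring and define its binomial transform b_n = sum over k from 0 to n of C(n,k)·a_k. Then for every n, the Hankel determinants agree: det(a_{i+j})_{i,j=0}^{n-1} = det(b_{i+j})_{i,j=0}^{n-1}. -/

import Mathlib

open Finset Matrix

/-- The q-integer `[n] = 1 + q + ... + q^(n-1)`. -/
def qint {R : Type*} [CommRing R] (q : R) (n : ℕ) : R := ∑ i ∈ Finset.range n, q ^ i

/-- The q-factorial `[n]! = [1][2]⋯[n]`. -/
def qfact {R : Type*} [CommRing R] (q : R) (n : ℕ) : R := ∏ i ∈ Finset.range n, qint q (i + 1)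

/-- The Gaussian binomial coefficient, via the q-Pascal recurrence. -/
def qbinom {R : Type*} [CommRing R] (q : R) : ℕ → ℕ → R
  | 0, 0 => 1
  | 0, _ + 1 => 0
  | _ + 1, 0 => 1
  | n + 1, k + 1 => qbinom q n k + q ^ (k + 1) * qbinom q n (k + 1)

/-- The q-Stirling numbers of the second kind:
`S[n,k] = S[n-1,k-1] + [k]·S[n-1,k]`, `S[0,k] = δ_{k0}`, `S[n,0] = δ_{n0}`. -/
def qStirling2 {R : Type*} [CommRing R] (q : R) : ℕ → ℕ → R
  | 0, 0 => 1
  | 0, _ + 1 => 0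
  | _ + 1, 0 => 0
  | n + 1, k + 1 => qStirling2 q n k + qint q (k + 1) * qStirling2 q n (k + 1)

/-- The q-Pochhammer symbol `(a;q)_m = ∏_{j<m} (1 - q^j a)`. -/
def qpoch {R : Type*} [CommRing R] (q a : R) (m : ℕ) : R := ∏ j ∈ Finset.range m, (1 - q ^ j * a)


lemma key_sum {R : Type*} [CommRing R] (a : ℕ → R) (i j N : ℕ) (hi : i < N) (hj : j < N) :
    ∑ p ∈ range N, ∑ q ∈ range N, (i.choose p : R) * (j.choose q : R) * a (p + q)
      = ∑ m ∈ range (i + j + 1), ((i + j).choose m : R) * a m := by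
  have hsub : range (i+1) ×ˢ range (j+1) ⊆ range N ×ˢ range N := by
    apply Finset.product_subset_product <;>
      exact Finset.range_subset_range.mpr (by omega)
  rw [← Finset.sum_product']
  rw [← Finset.sum_subset hsub (by
    intro x hx hx'
    simp only [Finset.mem_product, Finset.mem_range] at hx hx'
    rcases not_and_or.mp hx' with h | h
    · rw [Nat.choose_eq_zero_of_lt (by omega)]; push_cast; ring
    · rw [Nat.choose_eq_zero_of_lt (show j < x.2 by omega)]; push_cast; ring)]
  -- now RHS side
  have hdisj : ((range (i+j+1) : Finset ℕ) : Set ℕ).PairwiseDisjoint Finset.HasAntidiagonal.antidiagonal := by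
    intro x _ y _ hxy
    simp only [Finset.disjoint_left]
    intro pq h1 h2
    rw [Finset.HasAntidiagonal.mem_antidiagonal] at h1 h2
    exact (hxy (h1.symm.trans h2)).elim
  calc ∑ x ∈ range (i+1) ×ˢ range (j+1), (i.choose x.1 : R) * (j.choose x.2) * a (x.1 + x.2)
      = ∑ x ∈ (range (i+j+1)).biUnion Finset.HasAntidiagonal.antidiagonal,
          (i.choose x.1 : R) * (j.choose x.2) * a (x.1 + x.2) := by
        apply Finset.sum_subset
        · intro x hx
          simp only [Finset.mem_product, Finset.mem_range] at hx
          simp only [Finset.mem_biUnion, Finset.mem_range, Finset.HasAntidiagonal.mem_antidiagonal]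
          exact ⟨x.1 + x.2, by omega, rfl⟩
        · intro x hx hx'
          simp only [Finset.mem_biUnion, Finset.mem_range, Finset.HasAntidiagonal.mem_antidiagonal] at hx
          simp only [Finset.mem_product, Finset.mem_range] at hx'
          rcases not_and_or.mp hx' with h | h
          · rw [Nat.choose_eq_zero_of_lt (by omega)]; push_cast; ring
          · rw [Nat.choose_eq_zero_of_lt (show j < x.2 by omega)]; push_cast; ring
    _ = ∑ m ∈ range (i+j+1), ∑ x ∈ Finset.HasAntidiagonal.antidiagonal m,
          (i.choose x.1 : R) * (j.choose x.2) * a (x.1 + x.2) :=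
        Finset.sum_biUnion hdisj
    _ = ∑ m ∈ range (i+j+1), ((i+j).choose m : R) * a m := by
        refine Finset.sum_congr rfl fun m _ => ?_
        rw [Nat.add_choose_eq, Nat.cast_sum, Finset.sum_mul]
        refine Finset.sum_congr rfl fun x hx => ?_
        rw [Finset.HasAntidiagonal.mem_antidiagonal] at hx
        rw [hx]; push_cast; ring

/-- The binomial transform preserves Hankel determinants. -/
theorem hankel_det_binomial_transform {R : Type*} [CommRing R] (a b : ℕ → R)
    (hb : ∀ n, b n = ∑ k ∈ Finset.range (n + 1), (n.choose k : R) * a k) (n : ℕ) :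
    (Matrix.of fun i j : Fin n => a ((i : ℕ) + (j : ℕ))).det =
      (Matrix.of fun i j : Fin n => b ((i : ℕ) + (j : ℕ))).det := by
  set L : Matrix (Fin n) (Fin n) R := Matrix.of fun i k : Fin n => (((i : ℕ)).choose k : R) with hL
  have hdetL : L.det = 1 := by
    rw [Matrix.det_of_lowerTriangular]
    · simp [hL]
    · intro i j hij
      simp only [hL, Matrix.of_apply]
      rw [Nat.choose_eq_zero_of_lt (by exact_mod_cast hij)]
      simp
  have hB : (Matrix.of fun i j : Fin n => b ((i : ℕ) + (j : ℕ)))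
      = L * (Matrix.of fun i j : Fin n => a ((i : ℕ) + (j : ℕ))) * Lᵀ := by
    ext i j
    simp only [Matrix.mul_apply, Matrix.transpose_apply, Matrix.of_apply, hL, Finset.sum_mul]
    rw [hb, ← key_sum a i j n i.isLt j.isLt]
    rw [Finset.sum_comm]
    rw [← Fin.sum_univ_eq_sum_range (fun q => ∑ p ∈ Finset.range n,
        (((i : ℕ)).choose p : R) * (((j : ℕ)).choose q) * a (p + q))]
    refine Finset.sum_congr rfl fun q _ => ?_
    rw [← Fin.sum_univ_eq_sum_range (fun p =>
        (((i : ℕ)).choose p : R) * (((j : ℕ)).choose (q : ℕ)) * a (p + (q : ℕ)))]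
    exact Finset.sum_congr rfl fun p _ => by ring
  rw [hB, Matrix.det_mul, Matrix.det_mul, Matrix.det_transpose, hdetL, one_mul, mul_one]
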